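/- Let n ≥ 2 and let W = {±1}^n ⋊ S_n act on ℝ^n by signed permutations of the coordinates. Let c = (1/2, 1/2, …, 1/2); its stabilizer W_c in W is the symmetric group S_n acting by permutation of coordinates. Then every S_n-invariant polynomial function on ℝ^n lies in the ℝ-subalgebra generated by the W-invariant polynomial functions f together with their translates v ↦ f(v + c). -/

import Mathlib

open scoped RealInnerProductSpace

/-- The signed permutation `(ε, σ)` acting on `ℝ^n`: `x ↦ (ε i * x (σ i))_i`. -/
noncomputable def sgnPerm {n : ℕ} (ε : Fin n → ℝ) (σ : Equiv.Perm (Fin n))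
    (x : EuclideanSpace ℝ (Fin n)) : EuclideanSpace ℝ (Fin n) :=
  (WithLp.toLp 2 (fun i => ε i * x (σ i)) : EuclideanSpace ℝ (Fin n))

/-- A polynomial function on a real vector space `M`: an element of the `ℝ`-subalgebra of
`M → ℝ` generated by the linear functionals. -/
def IsPolyFun {M : Type*} [AddCommGroup M] [Module ℝ M] (f : M → ℝ) : Prop :=
  f ∈ Algebra.adjoin ℝ {g : M → ℝ | ∃ l : M →ₗ[ℝ] ℝ, g = ⇑l}

/-- Invariance of `f : ℝ^n → ℝ` under the group `W = {±1}^n ⋊ S_n` of all signed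
permutations of the coordinates. -/
def IsWInv {n : ℕ} (f : EuclideanSpace ℝ (Fin n) → ℝ) : Prop :=
  ∀ (ε : Fin n → ℝ), (∀ i, ε i = 1 ∨ ε i = -1) → ∀ σ : Equiv.Perm (Fin n),
    ∀ x, f (sgnPerm ε σ x) = f x

/-- Invariance of `f : ℝ^n → ℝ` under the group `W° = {±1}°^n ⋊ S_n` of signed
permutations with an even number of sign changes (`∏ ε i = 1`). -/
def IsW0Inv {n : ℕ} (f : EuclideanSpace ℝ (Fin n) → ℝ) : Prop :=
  ∀ (ε : Fin n → ℝ), (∀ i, ε i = 1 ∨ ε i = -1) → (∏ i, ε i = 1) →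
    ∀ σ : Equiv.Perm (Fin n), ∀ x, f (sgnPerm ε σ x) = f x

open MvPolynomial

variable {n : ℕ}

noncomputable def evalFun (n : ℕ) : MvPolynomial (Fin n) ℝ →ₐ[ℝ] (EuclideanSpace ℝ (Fin n) → ℝ) :=
  MvPolynomial.aeval (fun i => (fun x => x i : EuclideanSpace ℝ (Fin n) → ℝ))

lemma evalFun_apply (P : MvPolynomial (Fin n) ℝ) (x : EuclideanSpace ℝ (Fin n)) :
    evalFun n P x = MvPolynomial.eval (fun i => x i) P := by
  have h : (Pi.evalAlgHom ℝ (fun _ : EuclideanSpace ℝ (Fin n) => ℝ) x).comp (evalFun n)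
      = MvPolynomial.aeval (fun i => x i) := by
    apply MvPolynomial.algHom_ext
    intro i
    simp only [AlgHom.coe_comp, Function.comp_apply, evalFun, MvPolynomial.aeval_X]
    rfl
  have h2 := congrArg (fun g => g P) h
  simp only [AlgHom.coe_comp, Function.comp_apply, Pi.evalAlgHom_apply] at h2
  rw [h2, ← MvPolynomial.coe_aeval_eq_eval]
  rfl

def coordLM (n : ℕ) (i : Fin n) : EuclideanSpace ℝ (Fin n) →ₗ[ℝ] ℝ where
  toFun x := x i
  map_add' _ _ := rfl
  map_smul' _ _ := rfl

lemma isPolyFun_evalFun (P : MvPolynomial (Fin n) ℝ) : IsPolyFun (evalFun n P) := by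
  have : evalFun n P ∈ (evalFun n).range := AlgHom.mem_range_self _ _
  rw [evalFun, ← Algebra.adjoin_range_eq_range_aeval] at this
  refine Algebra.adjoin_mono ?_ this
  rintro g ⟨i, rfl⟩
  exact ⟨coordLM n i, rfl⟩

lemma range_evalFun (f : EuclideanSpace ℝ (Fin n) → ℝ) (hf : IsPolyFun f) :
    ∃ P : MvPolynomial (Fin n) ℝ, f = evalFun n P := by
  have hle : Algebra.adjoin ℝ {g : EuclideanSpace ℝ (Fin n) → ℝ | ∃ l : EuclideanSpace ℝ (Fin n) →ₗ[ℝ] ℝ, g = ⇑l}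
      ≤ (evalFun n).range := by
    rw [Algebra.adjoin_le_iff]
    rintro g ⟨l, rfl⟩
    refine ⟨∑ i, MvPolynomial.C (l (EuclideanSpace.single i 1)) * MvPolynomial.X i, ?_⟩
    funext x
    have hx : x = ∑ i, x i • EuclideanSpace.single i (1:ℝ) := by
      ext j
      simp [EuclideanSpace.single_apply, Pi.single_apply]
    have hL : evalFun n (∑ i, MvPolynomial.C (l (EuclideanSpace.single i (1:ℝ))) * MvPolynomial.X i) x
        = ∑ i, l (EuclideanSpace.single i (1:ℝ)) * x i := by
      rw [map_sum, Finset.sum_apply]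
      simp [evalFun_apply]
    have hR : l x = ∑ i, x i * l (EuclideanSpace.single i (1:ℝ)) := by
      conv_lhs => rw [hx]
      rw [map_sum]
      simp [map_smul]
    exact hL.trans ((Finset.sum_congr rfl fun i _ => mul_comm _ _).trans hR.symm)
  obtain ⟨P, hP⟩ := hle hf
  exact ⟨P, hP.symm⟩

lemma esymm_mem_adjoin_psum (k : ℕ) :
    esymm (Fin n) ℝ k ∈ Algebra.adjoin ℝ (Set.range (psum (Fin n) ℝ)) := by
  induction k using Nat.strong_induction_on with
  | _ k ih =>
  rcases Nat.eq_zero_or_pos k with rfl | hk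
  · rw [esymm_zero]; exact one_mem _
  have h := MvPolynomial.mul_esymm_eq_sum (Fin n) ℝ k
  have hkk : ((k : ℝ))⁻¹ • ((k : MvPolynomial (Fin n) ℝ) * esymm (Fin n) ℝ k)
      = esymm (Fin n) ℝ k := by
    have : ((k : ℕ) : MvPolynomial (Fin n) ℝ) = MvPolynomial.C ((k : ℝ)) := by
      simp
    rw [this, MvPolynomial.smul_eq_C_mul, ← mul_assoc, ← MvPolynomial.C_mul,
      inv_mul_cancel₀ (by exact_mod_cast hk.ne')]
    simp
  rw [← hkk, h]
  set S := Algebra.adjoin ℝ (Set.range (psum (Fin n) ℝ)) with hS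
  refine S.smul_mem (S.mul_mem (S.pow_mem (S.neg_mem S.one_mem) _) (S.sum_mem ?_)) _
  intro a ha
  rw [Finset.mem_filter] at ha
  exact S.mul_mem (S.mul_mem (S.pow_mem (S.neg_mem S.one_mem) _) (ih a.1 ha.2))
    (Algebra.subset_adjoin ⟨a.2, rfl⟩)

lemma symm_of_inv (f : EuclideanSpace ℝ (Fin n) → ℝ) (P : MvPolynomial (Fin n) ℝ)
    (hP : f = evalFun n P)
    (hinv : ∀ σ : Equiv.Perm (Fin n), ∀ x, f (sgnPerm (fun _ => 1) σ x) = f x) :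
    P.IsSymmetric := by
  intro σ
  apply MvPolynomial.funext
  intro x
  have h1 : MvPolynomial.eval x (rename σ P) = MvPolynomial.eval (x ∘ σ) P :=
    MvPolynomial.eval_rename _ _ _
  have h2 := hinv σ (WithLp.toLp 2 x)
  rw [hP, evalFun_apply, evalFun_apply] at h2
  have h3 : (fun i => sgnPerm (fun _ => (1:ℝ)) σ (WithLp.toLp 2 x) i) = x ∘ σ := by
    funext i; simp [sgnPerm]
  rw [h3] at h2
  exact h1.trans h2

lemma symm_mem_adjoin_psum (P : MvPolynomial (Fin n) ℝ) (hP : P.IsSymmetric) :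
    P ∈ Algebra.adjoin ℝ (Set.range (psum (Fin n) ℝ)) := by
  obtain ⟨Q, hQ⟩ := MvPolynomial.esymmAlgHom_surjective (σ := Fin n) (R := ℝ)
    (n := n) (by simp) ⟨P, hP⟩
  have hPQ : P = MvPolynomial.aeval (fun i : Fin n => esymm (Fin n) ℝ (i + 1)) Q := by
    have := congrArg Subtype.val hQ
    rw [MvPolynomial.esymmAlgHom_apply] at this
    exact this.symm
  rw [hPQ]
  have : MvPolynomial.aeval (fun i : Fin n => esymm (Fin n) ℝ (i + 1)) Q
      ∈ Algebra.adjoin ℝ (Set.range (fun i : Fin n => esymm (Fin n) ℝ (i + 1))) := by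
    rw [Algebra.adjoin_range_eq_range_aeval]
    exact AlgHom.mem_range_self _ _
  refine Algebra.adjoin_le ?_ this
  rintro g ⟨i, rfl⟩
  exact esymm_mem_adjoin_psum _

lemma evalFun_psum (k : ℕ) :
    evalFun n (psum (Fin n) ℝ k) = fun x : EuclideanSpace ℝ (Fin n) => ∑ i, x i ^ k := by
  funext x
  rw [evalFun_apply]
  simp [psum]

lemma isWInv_evenPow (N : ℕ) (hN : Even N) :
    IsWInv (fun x : EuclideanSpace ℝ (Fin n) => ∑ i, x i ^ N) := by
  intro ε hε σ x
  have happ : ∀ i, (sgnPerm ε σ x) i = ε i * x (σ i) := fun _ => rfl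
  simp only [happ, mul_pow]
  have hε2 : ∀ i, ε i ^ N = 1 := by
    intro i
    rcases hε i with h | h <;> rw [h]
    · exact one_pow N
    · exact hN.neg_one_pow
  simp only [hε2, one_mul]
  exact Equiv.sum_comp σ (fun j => x j ^ N)

lemma isPolyFun_powSum (N : ℕ) :
    IsPolyFun (fun x : EuclideanSpace ℝ (Fin n) => ∑ i, x i ^ N) := by
  rw [← evalFun_psum]
  exact isPolyFun_evalFun _

lemma psumFun_mem (n : ℕ) (c : EuclideanSpace ℝ (Fin n)) (hc : ∀ i : Fin n, c i = (1 : ℝ) / 2)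
    (k : ℕ) :
    (fun x : EuclideanSpace ℝ (Fin n) => ∑ i, x i ^ k) ∈ Algebra.adjoin ℝ
      ({g : EuclideanSpace ℝ (Fin n) → ℝ | IsPolyFun g ∧ IsWInv g} ∪
       {g : EuclideanSpace ℝ (Fin n) → ℝ | ∃ h : EuclideanSpace ℝ (Fin n) → ℝ,
          (IsPolyFun h ∧ IsWInv h) ∧ g = fun v => h (v + c)}) := by
  set A := Algebra.adjoin ℝ
      ({g : EuclideanSpace ℝ (Fin n) → ℝ | IsPolyFun g ∧ IsWInv g} ∪
       {g : EuclideanSpace ℝ (Fin n) → ℝ | ∃ h : EuclideanSpace ℝ (Fin n) → ℝ,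
          (IsPolyFun h ∧ IsWInv h) ∧ g = fun v => h (v + c)}) with hA
  -- even power sums are generators
  have heven : ∀ N : ℕ, Even N →
      (fun x : EuclideanSpace ℝ (Fin n) => ∑ i, x i ^ N) ∈ A := by
    intro N hN
    exact Algebra.subset_adjoin (Or.inl ⟨isPolyFun_powSum N, isWInv_evenPow N hN⟩)
  induction k using Nat.strong_induction_on with
  | _ k ih =>
  rcases Nat.even_or_odd k with hk | hk
  · exact heven k hk
  -- odd case
  have hN : Even (k + 1) := hk.add_one
  set h : EuclideanSpace ℝ (Fin n) → ℝ := fun x => ∑ i, x i ^ (k + 1) with hh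
  have hhA : h ∈ A := heven (k + 1) hN
  set t : EuclideanSpace ℝ (Fin n) → ℝ := fun v => h (v + c) with ht
  have htA : t ∈ A :=
    Algebra.subset_adjoin (Or.inr ⟨h, ⟨isPolyFun_powSum (k + 1), isWInv_evenPow (k + 1) hN⟩, rfl⟩)
  -- the binomial identity
  have key : ∀ x : EuclideanSpace ℝ (Fin n),
      t x = (∑ j ∈ Finset.range k,
          (((k+1).choose j : ℝ) * (1/2) ^ (k+1-j)) * (∑ i, x i ^ j))
        + ((k+1 : ℝ)/2) * (∑ i, x i ^ k) + h x := by
    intro x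
    have hxc : ∀ i, (x + c) i = x i + 1/2 := by
      intro i
      rw [PiLp.add_apply, hc]
    have expand : t x = ∑ j ∈ Finset.range (k+2),
        (((k+1).choose j : ℝ) * (1/2) ^ (k+1-j)) * (∑ i, x i ^ j) := by
      show (∑ i, ((x + c) i) ^ (k+1)) = _
      simp only [hxc]
      have : ∀ i : Fin n, (x i + 1/2) ^ (k+1)
          = ∑ j ∈ Finset.range (k+2), x i ^ j * (1/2 : ℝ) ^ (k+1-j) * (k+1).choose j :=
        fun i => add_pow (x i) (1/2 : ℝ) (k+1)
      simp only [this]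
      rw [Finset.sum_comm]
      refine Finset.sum_congr rfl fun j _ => ?_
      rw [Finset.mul_sum]
      refine Finset.sum_congr rfl fun i _ => by ring
    rw [expand, Finset.sum_range_succ, Finset.sum_range_succ]
    have e1 : (((k+1).choose (k+1) : ℝ) * (1/2) ^ (k+1-(k+1))) * (∑ i, x i ^ (k+1)) = h x := by
      simp [hh]
    have e2 : (((k+1).choose k : ℝ) * (1/2) ^ (k+1-k)) = (k+1 : ℝ)/2 := by
      rw [Nat.choose_succ_self_right]
      have : k + 1 - k = 1 := by omega
      rw [this]
      push_cast
      ring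
    rw [e1, e2]
  -- conclude
  have hkpos : (k + 1 : ℝ) / 2 ≠ 0 := by positivity
  have hexpr : (fun x : EuclideanSpace ℝ (Fin n) => ∑ i, x i ^ k)
      = ((k+1 : ℝ)/2)⁻¹ • (t - (∑ j ∈ Finset.range k,
          (((k+1).choose j : ℝ) * (1/2) ^ (k+1-j)) • (fun x : EuclideanSpace ℝ (Fin n) => ∑ i, x i ^ j)) - h) := by
    funext x
    have hk2 := key x
    simp only [Pi.smul_apply, Pi.sub_apply, Finset.sum_apply, smul_eq_mul]
    rw [hk2]
    rw [show (∑ j ∈ Finset.range k,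
          (((k+1).choose j : ℝ) * (1/2) ^ (k+1-j)) * (∑ i, x i ^ j))
        + ((k+1 : ℝ)/2) * (∑ i, x i ^ k) + h x
        - (∑ j ∈ Finset.range k,
          (((k+1).choose j : ℝ) * (1/2) ^ (k+1-j)) * (∑ i, x i ^ j)) - h x
        = ((k+1 : ℝ)/2) * (∑ i, x i ^ k) from by ring]
    exact (inv_mul_cancel_left₀ hkpos _).symm
  rw [hexpr]
  refine A.smul_mem (A.sub_mem (A.sub_mem htA (A.sum_mem ?_)) hhA) _
  intro j hj
  exact A.smul_mem (ih j (Finset.mem_range.mp hj)) _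


theorem BC_stabilizer_of_c_invariants_generated
    (n : ℕ) (hn : 2 ≤ n)
    (c : EuclideanSpace ℝ (Fin n))
    (hc : ∀ i : Fin n, c i = (1 : ℝ) / 2)
    (f : EuclideanSpace ℝ (Fin n) → ℝ) (hf : IsPolyFun f)
    -- `f` is invariant under the stabilizer `W_c = S_n` of `c` in `W`,
    -- i.e. under all permutations of the coordinates
    (hinv : ∀ σ : Equiv.Perm (Fin n), ∀ x, f (sgnPerm (fun _ => 1) σ x) = f x) :
    f ∈ Algebra.adjoin ℝ
      ({g : EuclideanSpace ℝ (Fin n) → ℝ | IsPolyFun g ∧ IsWInv g} ∪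
       {g : EuclideanSpace ℝ (Fin n) → ℝ | ∃ h : EuclideanSpace ℝ (Fin n) → ℝ,
          (IsPolyFun h ∧ IsWInv h) ∧ g = fun v => h (v + c)}) := by
  obtain ⟨P, hP⟩ := range_evalFun f hf
  have hsym := symm_of_inv f P hP hinv
  have hmem := symm_mem_adjoin_psum P hsym
  have hmap : f ∈ Subalgebra.map (evalFun n) (Algebra.adjoin ℝ (Set.range (psum (Fin n) ℝ))) :=
    ⟨P, hmem, hP.symm⟩
  rw [AlgHom.map_adjoin] at hmap
  refine Algebra.adjoin_le ?_ hmap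
  rintro g ⟨_, ⟨k, rfl⟩, rfl⟩
  rw [evalFun_psum]
  exact psumFun_mem n c hc k
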